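/- The sum over all partitions λ with |λ| ≤ n of (kn)!/(m_λ·(kn−ℓ(λ))!) equals binomial((k+1)n, n), the number of k-divisible type B noncrossing partitions of {±1,...,±kn}. -/

import Mathlib

open Finset

/-- content of a tuple: the multiset of its values -/
def content {N : ℕ} (f : Fin N → ℕ) : Multiset ℕ := Multiset.map f Finset.univ.val

lemma content_card {N : ℕ} (f : Fin N → ℕ) : Multiset.card (content f) = N := by
  simp [content]

lemma content_sum {N : ℕ} (f : Fin N → ℕ) : (content f).sum = ∑ i, f i := rfl

lemma apply_mem_content {N : ℕ} (f : Fin N → ℕ) (i : Fin N) : f i ∈ content f := by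
  exact Multiset.mem_map_of_mem f (Finset.mem_univ_val i)

lemma content_succ {N : ℕ} (f : Fin (N + 1) → ℕ) :
    content f = f (Fin.last N) ::ₘ content (f ∘ Fin.castSucc) := by
  rw [content, Fin.univ_castSuccEmb, Finset.cons_val, Multiset.map_cons]
  congr 1
  rw [Finset.map_val, Multiset.map_map]
  rfl

lemma content_snoc {N : ℕ} (g : Fin N → ℕ) (a : ℕ) :
    content (Fin.snoc g a) = a ::ₘ content g := by
  rw [content_succ]
  congr 1
  · exact Fin.snoc_last ..
  · congr 1
    funext i
    exact Fin.snoc_castSucc ..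

/-- the set of words (tuples) with prescribed content `s` -/
def WF (N : ℕ) (s : Multiset ℕ) : Finset (Fin N → ℕ) :=
  (Fintype.piFinset fun _ => insert 0 s.toFinset).filter fun f => content f = s

lemma mem_WF {N : ℕ} {s : Multiset ℕ} {f : Fin N → ℕ} : f ∈ WF N s ↔ content f = s := by
  constructor
  · intro h; exact (Finset.mem_filter.1 h).2
  · intro h
    refine Finset.mem_filter.2 ⟨Fintype.mem_piFinset.2 fun i => ?_, h⟩
    exact Finset.mem_insert_of_mem (Multiset.mem_toFinset.2 (h ▸ apply_mem_content f i))

lemma WF_card : ∀ (N : ℕ) (s : Multiset ℕ), Multiset.card s = N →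
    (WF N s).card * ∏ a ∈ s.toFinset, (s.count a).factorial = N.factorial := by
  intro N
  induction N with
  | zero =>
    intro s hs
    rw [Multiset.card_eq_zero] at hs
    subst hs
    have h1 : WF 0 0 = {fun i => i.elim0} := by
      rw [Finset.eq_singleton_iff_unique_mem]
      constructor
      · exact mem_WF.2 (by simp [content])
      · intro g _; funext i; exact i.elim0
    simp [h1]
  | succ N ih =>
    intro s hs
    have hfib : (WF (N + 1) s).card =
        ∑ a ∈ s.toFinset, ((WF (N + 1) s).filter fun f => f (Fin.last N) = a).card := by
      apply Finset.card_eq_sum_card_fiberwise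
      intro f hf
      rw [Finset.mem_coe, mem_WF] at hf
      exact Finset.mem_coe.2 (Multiset.mem_toFinset.2 (hf ▸ apply_mem_content f (Fin.last N)))
    have hstep : ∀ a ∈ s.toFinset,
        ((WF (N + 1) s).filter fun f => f (Fin.last N) = a).card = (WF N (s.erase a)).card := by
      intro a ha
      apply Finset.card_bij' (fun f _ => f ∘ Fin.castSucc) (fun g _ => Fin.snoc g a)
      · intro f hf
        obtain ⟨hf1, hf2⟩ := Finset.mem_filter.1 hf
        rw [mem_WF] at hf1
        rw [mem_WF]
        rw [content_succ, hf2] at hf1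
        rw [← hf1, Multiset.erase_cons_head]
      · intro g hg
        rw [mem_WF] at hg
        refine Finset.mem_filter.2 ⟨mem_WF.2 ?_, Fin.snoc_last ..⟩
        rw [content_snoc, hg, Multiset.cons_erase (Multiset.mem_toFinset.1 ha)]
      · intro f hf
        have := (Finset.mem_filter.1 hf).2
        funext i
        refine Fin.lastCases ?_ ?_ i
        · rw [Fin.snoc_last, this]
        · intro j; rw [Fin.snoc_castSucc]; rfl
      · intro g hg
        funext i
        exact Fin.snoc_castSucc ..
    have key : ∀ a ∈ s.toFinset,
        (WF N (s.erase a)).card * ∏ i ∈ s.toFinset, (s.count i).factorial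
          = s.count a * N.factorial := by
      intro a ha
      have hmem : a ∈ s := Multiset.mem_toFinset.1 ha
      have hcount : 0 < s.count a := Multiset.count_pos.2 hmem
      have h1 : ∏ i ∈ s.toFinset, (s.count i).factorial
          = s.count a * ∏ i ∈ s.toFinset, ((s.erase a).count i).factorial := by
        rw [← Finset.prod_erase_mul _ _ ha, ← Finset.prod_erase_mul _ _ ha]
        rw [Finset.prod_congr rfl (g := fun i => ((s.erase a).count i).factorial)
          (fun i hi => by simp [Multiset.count_erase_of_ne (Finset.ne_of_mem_erase hi)])]
        rw [Multiset.count_erase_self, mul_comm (s.count a), mul_assoc]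
        congr 1
        rw [mul_comm]
        exact (Nat.mul_factorial_pred hcount.ne').symm
      have h2 : ∏ i ∈ s.toFinset, ((s.erase a).count i).factorial
          = ∏ i ∈ (s.erase a).toFinset, ((s.erase a).count i).factorial := by
        refine (Finset.prod_subset ?_ ?_).symm
        · exact Multiset.toFinset_subset.2 (Multiset.subset_of_le (Multiset.erase_le a s))
        · intro x _ hx
          rw [Multiset.count_eq_zero_of_notMem (fun hc => hx (Multiset.mem_toFinset.2 hc))]
          rfl
      have hcard : Multiset.card (s.erase a) = N := by
        rw [Multiset.card_erase_of_mem hmem, hs]; rfl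
      rw [h1, h2, mul_left_comm, ih (s.erase a) hcard]
    rw [hfib, Finset.sum_mul]
    rw [Finset.sum_congr rfl (fun a ha => by rw [hstep a ha, key a ha])]
    rw [← Finset.sum_mul, Multiset.toFinset_sum_count_eq, hs]
    rw [Nat.factorial_succ]

lemma sum_count_univ {α : Type*} [Fintype α] [DecidableEq α] (s : Multiset α) :
    ∑ a : α, s.count a = Multiset.card s := by
  rw [← Multiset.toFinset_sum_count_eq]
  exact (Finset.sum_subset (Finset.subset_univ _) (fun x _ hx =>
    Multiset.count_eq_zero_of_notMem (fun h => hx (Multiset.mem_toFinset.2 h)))).symm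

lemma univ_sum_replicate_count {α : Type*} [Fintype α] [DecidableEq α] (s : Multiset α) :
    ∑ a : α, Multiset.replicate (s.count a) a = s := by
  have h : ∀ a ∈ Finset.univ \ s.toFinset, Multiset.replicate (s.count a) a = 0 := by
    intro a ha
    rw [Multiset.count_eq_zero_of_notMem
      (fun h => (Finset.mem_sdiff.1 ha).2 (Multiset.mem_toFinset.2 h))]
    rfl
  rw [← Finset.sum_subset (Finset.subset_univ s.toFinset)
    (fun x hx hx2 => h x (Finset.mem_sdiff.2 ⟨hx, hx2⟩))]
  rw [Finset.sum_congr rfl (g := fun a => s.count a • ({a} : Multiset α))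
    (fun a _ => (Multiset.nsmul_singleton _ _).symm)]
  exact Multiset.toFinset_sum_count_nsmul_eq s

lemma count_sum_replicate {α : Type*} [Fintype α] [DecidableEq α] (g : α → ℕ) (a : α) :
    Multiset.count a (∑ j : α, Multiset.replicate (g j) j) = g a := by
  rw [Multiset.count_sum']
  simp [Multiset.count_replicate]

lemma card_finset_sum {ι α : Type*} (t : Finset ι) (f : ι → Multiset α) :
    Multiset.card (∑ i ∈ t, f i) = ∑ i ∈ t, Multiset.card (f i) := by
  induction t using Finset.cons_induction with
  | empty => simp
  | cons a t ha ih => simp [Finset.sum_cons, ih]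

/-- tuples with sum at most n -/
def Fst (N n : ℕ) : Finset (Fin N → ℕ) :=
  (Fintype.piFinset fun _ => Finset.range (n + 1)).filter fun f => ∑ i, f i ≤ n

lemma mem_Fst {N n : ℕ} {f : Fin N → ℕ} : f ∈ Fst N n ↔ ∑ i, f i ≤ n := by
  constructor
  · intro h; exact (Finset.mem_filter.1 h).2
  · intro h
    refine Finset.mem_filter.2 ⟨Fintype.mem_piFinset.2 fun i => Finset.mem_range.2 ?_, h⟩
    have : f i ≤ ∑ j, f j := Finset.single_le_sum (fun j _ => Nat.zero_le _) (Finset.mem_univ i)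
    omega

lemma Fst_card (N n : ℕ) : (Fst N n).card = (N + n).choose n := by
  have hb : (Fst N n).card = (Finset.univ : Finset (Sym (Fin (N + 1)) n)).card := by
    refine Finset.card_bij'
      (fun f hf => ⟨∑ j : Fin (N + 1), Multiset.replicate (Fin.snoc (α := fun _ => ℕ) f (n - ∑ i, f i) j) j, ?_⟩)
      (fun s _ => fun i => s.1.count i.castSucc) (fun f hf => Finset.mem_univ _)
      (fun s _ => ?_) (fun f hf => ?_) (fun s _ => ?_)
    · rw [card_finset_sum]
      simp only [Multiset.card_replicate]
      rw [Fin.sum_univ_castSucc]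
      simp only [Fin.snoc_castSucc, Fin.snoc_last]
      exact Nat.add_sub_cancel' (mem_Fst.1 hf)
    · rw [mem_Fst]
      have h1 : ∑ a : Fin (N + 1), s.1.count a = n := by rw [sum_count_univ, s.2]
      rw [Fin.sum_univ_castSucc] at h1
      show (∑ i : Fin N, Multiset.count i.castSucc s.1) ≤ n
      omega
    · funext i
      simp only
      rw [count_sum_replicate, Fin.snoc_castSucc]
    · have h1 : ∑ a : Fin (N + 1), s.1.count a = n := by rw [sum_count_univ, s.2]
      rw [Fin.sum_univ_castSucc] at h1
      have hc : ∀ a : Fin (N + 1),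
          (Fin.snoc (α := fun _ => ℕ) (fun i => s.1.count i.castSucc)
            (n - ∑ i : Fin N, s.1.count i.castSucc) a) = s.1.count a := by
        intro a
        induction a using Fin.lastCases with
        | last => rw [Fin.snoc_last]; omega
        | cast j => rw [Fin.snoc_castSucc]
      refine Subtype.ext ?_
      simp only
      rw [Finset.sum_congr rfl (fun a _ => by rw [hc a])]
      exact univ_sum_replicate_count s.1
  rw [hb, Finset.card_univ, Sym.card_sym_eq_multichoose, Fintype.card_fin, Nat.multichoose_eq]
  congr 1
  omega

/-- `m_λ = ∏_i m_i(λ)!`, the product of factorials of multiplicities of parts. -/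
def mfac (lam : Multiset ℕ) : ℕ := lam.toFinset.prod fun i => (lam.count i).factorial

lemma mfac_pos (s : Multiset ℕ) : 0 < mfac s :=
  Finset.prod_pos fun _ _ => Nat.factorial_pos _

lemma card_le_sum_of_pos {s : Multiset ℕ} (h : ∀ i ∈ s, 0 < i) : Multiset.card s ≤ s.sum := by
  induction s using Multiset.induction with
  | empty => simp
  | cons a s ih =>
    rw [Multiset.card_cons, Multiset.sum_cons]
    have h1 := h a (Multiset.mem_cons_self a s)
    have h2 := ih (fun i hi => h i (Multiset.mem_cons_of_mem hi))
    omega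

lemma filter_pos_sum (s : Multiset ℕ) : (s.filter (0 < ·)).sum = s.sum := by
  conv_rhs => rw [← Multiset.filter_add_not (0 < ·) s]
  rw [Multiset.sum_add]
  have h : (s.filter fun a => ¬0 < a).sum = 0 :=
    Multiset.sum_eq_zero (fun x hx => by have := Multiset.of_mem_filter hx; omega)
  omega

/-- classify a tuple by the partition of its nonzero entries -/
def pOf (m : ℕ) {N : ℕ} (f : Fin N → ℕ) : Nat.Partition m :=
  if h : ∑ i, f i = m then
    { parts := (content f).filter (0 < ·)
      parts_pos := fun hi => Multiset.of_mem_filter hi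
      parts_sum := by rw [filter_pos_sum, content_sum, h] }
  else
    { parts := Multiset.replicate m 1
      parts_pos := fun hi => by rw [Multiset.eq_of_mem_replicate hi]; norm_num
      parts_sum := by simp }

lemma fiber_eq {N n m : ℕ} (hm : m ≤ n) (_hN : n ≤ N) (P : Nat.Partition m) :
    ((Fst N n).filter (fun f => ∑ i, f i = m)).filter (fun f => pOf m f = P)
      = WF N (P.parts + Multiset.replicate (N - Multiset.card P.parts) 0) := by
  have hl : Multiset.card P.parts ≤ m := by
    have := card_le_sum_of_pos (s := P.parts) (fun i hi => P.parts_pos hi)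
    rw [P.parts_sum] at this
    exact this
  ext f
  simp only [Finset.mem_filter, mem_Fst, mem_WF]
  constructor
  · rintro ⟨⟨hle, hsum⟩, hP⟩
    rw [pOf, dif_pos hsum] at hP
    have hparts : (content f).filter (0 < ·) = P.parts := congrArg Nat.Partition.parts hP
    have hzero : (content f).filter (fun a => ¬0 < a) =
        Multiset.replicate (Multiset.card ((content f).filter (fun a => ¬0 < a))) 0 :=
      Multiset.eq_replicate_card.2 (fun b hb => by have := Multiset.of_mem_filter hb; omega)
    have hcard : Multiset.card ((content f).filter (0 < ·))
        + Multiset.card ((content f).filter (fun a => ¬0 < a)) = N := by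
      rw [← Multiset.card_add, Multiset.filter_add_not, content_card]
    rw [hparts] at hcard
    conv_lhs => rw [← Multiset.filter_add_not (0 < ·) (content f)]
    rw [hparts, hzero]
    have hd : Multiset.card ((content f).filter (fun a => ¬0 < a))
        = N - Multiset.card P.parts := by omega
    rw [hd]
  · intro h
    have hsum : ∑ i, f i = m := by
      rw [← content_sum, h, Multiset.sum_add, P.parts_sum, Multiset.sum_replicate]
      simp
    refine ⟨⟨hsum ▸ hm, hsum⟩, ?_⟩
    rw [pOf, dif_pos hsum]
    apply Nat.Partition.ext
    show (content f).filter (0 < ·) = P.parts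
    rw [h, Multiset.filter_add]
    rw [Multiset.filter_eq_self.2 (fun a ha => P.parts_pos ha)]
    rw [Multiset.filter_eq_nil.2 (fun a ha => by rw [Multiset.eq_of_mem_replicate ha]; omega)]
    rw [add_zero]

lemma term_eq {N m : ℕ} (P : Nat.Partition m) (hl : Multiset.card P.parts ≤ N) :
    (WF N (P.parts + Multiset.replicate (N - Multiset.card P.parts) 0)).card
      = N.factorial / (mfac P.parts * (N - Multiset.card P.parts).factorial) := by
  set s := P.parts + Multiset.replicate (N - Multiset.card P.parts) 0 with hs
  have hcard : Multiset.card s = N := by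
    rw [hs, Multiset.card_add, Multiset.card_replicate]
    omega
  have h0 : (0 : ℕ) ∉ P.parts := fun h => lt_irrefl 0 (P.parts_pos h)
  have hsub : s.toFinset ⊆ insert 0 P.parts.toFinset := by
    intro x hx
    rcases Multiset.mem_add.1 (Multiset.mem_toFinset.1 hx) with h | h
    · exact Finset.mem_insert_of_mem (Multiset.mem_toFinset.2 h)
    · rw [Multiset.eq_of_mem_replicate h]; exact Finset.mem_insert_self _ _
  have hD : ∏ a ∈ s.toFinset, (s.count a).factorial
      = mfac P.parts * (N - Multiset.card P.parts).factorial := by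
    rw [Finset.prod_subset hsub (fun x _ hx => by
      rw [Multiset.count_eq_zero_of_notMem (fun hc => hx (Multiset.mem_toFinset.2 hc))]; rfl)]
    rw [Finset.prod_insert (fun hc => h0 (Multiset.mem_toFinset.1 hc))]
    have hc0 : s.count 0 = N - Multiset.card P.parts := by
      rw [hs, Multiset.count_add, Multiset.count_eq_zero_of_notMem h0,
        Multiset.count_replicate, if_pos rfl, zero_add]
    have hci : ∀ i ∈ P.parts.toFinset, (s.count i).factorial = (P.parts.count i).factorial := by
      intro i hi
      have hpos := P.parts_pos (Multiset.mem_toFinset.1 hi)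
      rw [hs, Multiset.count_add, Multiset.count_replicate, if_neg (by omega), add_zero]
    rw [hc0, Finset.prod_congr rfl hci, mul_comm]
    rfl
  have hpos : 0 < mfac P.parts * (N - Multiset.card P.parts).factorial :=
    Nat.mul_pos (mfac_pos _) (Nat.factorial_pos _)
  have hkey := WF_card N s hcard
  rw [hD] at hkey
  rw [← hkey, Nat.mul_div_cancel _ hpos]

/-- The sum over all partitions `λ` with `|λ| ≤ n` of `(kn)!/(m_λ·(kn-ℓ(λ))!)` equals
`C((k+1)n, n)`, the number of `k`-divisible type B noncrossing partitions of `{±1,…,±kn}`. -/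
theorem stmt_16 (k n : ℕ) (hk : 0 < k) :
    ∑ m ∈ Finset.range (n + 1), ∑ P : Nat.Partition m,
        (k * n).factorial /
          (mfac P.parts * (k * n - Multiset.card P.parts).factorial) =
      Nat.choose ((k + 1) * n) n := by
  have hnN : n ≤ k * n := Nat.le_mul_of_pos_left n hk
  have hrhs : (k + 1) * n = k * n + n := by ring
  rw [hrhs, ← Fst_card (k * n) n]
  rw [Finset.card_eq_sum_card_fiberwise (s := Fst (k * n) n) (f := fun f => ∑ i, f i) (t := Finset.range (n + 1))
    (fun f hf => Finset.mem_range.2 (Nat.lt_succ_of_le (mem_Fst.1 hf)))]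
  refine Finset.sum_congr rfl fun m hm => ?_
  have hmn : m ≤ n := Nat.lt_succ_iff.1 (Finset.mem_range.1 hm)
  rw [Finset.card_eq_sum_card_fiberwise (f := fun f => pOf m f) (t := Finset.univ)
    (fun f _ => Finset.mem_univ _)]
  refine Finset.sum_congr rfl fun P _ => ?_
  have hl : Multiset.card P.parts ≤ k * n := by
    have h1 := card_le_sum_of_pos (s := P.parts) (fun i hi => P.parts_pos hi)
    rw [P.parts_sum] at h1
    omega
  rw [fiber_eq hmn hnN P, term_eq P hl]
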